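/- Let n ∈ ℕ₊, α ∈ (0,1), δ > 0 be such that η := (1+δ)³α/(1−α) < 1 and, with σ := √2·δ·(1+δ)²·α·√((1+α)/(1−α)) + (1+δ)²·α²/(2(1−α)), one has σ < α; set β := (α−σ)/(1 + α/√(2n)). Let H̃ ∈ ℝ^{n×n} be symmetric positive semidefinite, λ ≥ 0, Ω = [I, −I] ∈ ℝ^{n×2n}, τ > 0, and let x, s, x̃, s̃ ∈ ℝ^{2n} have all components positive with ‖x ⊙ s − τe‖ ≤ ατ, x̃ᵢ/xᵢ ∈ [1/(1+δ), 1+δ] and s̃ᵢ/sᵢ ∈ [1/(1+δ), 1+δ] for every i. Suppose Δz ∈ ℝ^n and Δx, Δs ∈ ℝ^{2n} satisfy the approximated Newton system: 2λH̃Δz + ΩΔx = 0, ΩᵀΔz + Δs = 0, and s̃ ⊙ Δx + x̃ ⊙ Δs = τe − x ⊙ s. Then the next iterate x⁺ = x + Δx, s⁺ = s + Δs and τ⁺ = (1 − β/√(2n))·τ satisfy: every component of x⁺ and of s⁺ is positive, and ‖x⁺ ⊙ s⁺ − τ⁺e‖ ≤ α·τ⁺. -/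

import Mathlib

open Matrix

set_option maxHeartbeats 1000000

/-- Euclidean norm of a finitely-indexed real vector. -/
noncomputable def enorm' {ι : Type*} [Fintype ι] (v : ι → ℝ) : ℝ :=
  Real.sqrt (∑ i, v i ^ 2)

section EnormHelpers
variable {ι : Type*} [Fintype ι]

lemma enorm'_nonneg (v : ι → ℝ) : 0 ≤ enorm' v := Real.sqrt_nonneg _

lemma sq_enorm' (v : ι → ℝ) : enorm' v ^ 2 = ∑ i, v i ^ 2 :=
  Real.sq_sqrt (Finset.sum_nonneg fun _ _ => sq_nonneg _)

lemma enorm'_mono {u w : ι → ℝ} (h : ∀ i, |u i| ≤ |w i|) : enorm' u ≤ enorm' w :=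
  Real.sqrt_le_sqrt (Finset.sum_le_sum fun i _ => by
    rw [← sq_abs (u i), ← sq_abs (w i)]
    exact pow_le_pow_left₀ (abs_nonneg _) (h i) 2)

lemma enorm'_eq_norm (v : ι → ℝ) : enorm' v = ‖(WithLp.equiv 2 (ι → ℝ)).symm v‖ := by
  rw [EuclideanSpace.norm_eq]; simp [enorm', Real.norm_eq_abs, sq_abs]

lemma enorm'_add_le (u w : ι → ℝ) : enorm' (fun i => u i + w i) ≤ enorm' u + enorm' w := by
  rw [enorm'_eq_norm, enorm'_eq_norm, enorm'_eq_norm]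
  exact norm_add_le ((WithLp.equiv 2 (ι → ℝ)).symm u) ((WithLp.equiv 2 (ι → ℝ)).symm w)

lemma abs_le_enorm' (v : ι → ℝ) (i : ι) : |v i| ≤ enorm' v := by
  rw [enorm', ← Real.sqrt_sq_eq_abs]
  exact Real.sqrt_le_sqrt (Finset.single_le_sum (fun j _ => sq_nonneg (v j)) (Finset.mem_univ i))

lemma enorm'_smul (c : ℝ) (hc : 0 ≤ c) (v : ι → ℝ) :
    enorm' (fun i => c * v i) = c * enorm' v := by
  simp only [enorm', mul_pow, ← Finset.mul_sum]
  rw [Real.sqrt_mul (by positivity), Real.sqrt_sq hc]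

lemma enorm'_const (c : ℝ) (hc : 0 ≤ c) :
    enorm' (fun _ : ι => c) = Real.sqrt (Fintype.card ι) * c := by
  rw [enorm', Finset.sum_const, Finset.card_univ, nsmul_eq_mul, Real.sqrt_mul (by positivity),
    Real.sqrt_sq hc]

lemma enorm'_abs (v : ι → ℝ) : enorm' (fun i => |v i|) = enorm' v := by simp [enorm']

lemma enorm'_le_sum_abs (v : ι → ℝ) : enorm' v ≤ ∑ i, |v i| := by
  rw [enorm']
  have h1 : ∑ i, v i ^ 2 ≤ (∑ i, |v i|) ^ 2 := by
    calc ∑ i, v i ^ 2 = ∑ i, |v i| ^ 2 := by simp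
    _ ≤ (∑ i, |v i|) ^ 2 := Finset.sum_sq_le_sq_sum_of_nonneg (fun i _ => abs_nonneg _)
  exact (Real.sqrt_le_sqrt h1).trans
    (by rw [Real.sqrt_sq (Finset.sum_nonneg fun i _ => abs_nonneg _)])

lemma le_of_sq_le_sq' {a b : ℝ} (hb : 0 ≤ b) (h : a ^ 2 ≤ b ^ 2) : a ≤ b := by
  nlinarith [abs_nonneg a, sq_abs a, le_abs_self a]

lemma ratio_abs {a b d : ℝ} (hd : 0 < d)
    (h1 : b ≤ (1 + d) * a) (h2 : a ≤ (1 + d) * b) : |a - b| ≤ d * b := by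
  rw [abs_le]
  constructor
  · nlinarith
  · nlinarith

end EnormHelpers

/-- Theorem 1 of the paper, one step: the next iterate of the approximated
Newton step stays strictly positive and in the `α`-neighborhood of the central path for
`τ⁺ = (1 − β/√(2n))τ`. -/
theorem approx_newton_step_invariance (n : ℕ) (hn : 0 < n)
    (α δ η σ β : ℝ) (hα : α ∈ Set.Ioo (0:ℝ) 1) (hδ : 0 < δ)
    (hηdef : η = (1 + δ) ^ 3 * α / (1 - α)) (hηlt : η < 1)
    (hσdef : σ = Real.sqrt 2 * δ * (1 + δ) ^ 2 * α * Real.sqrt ((1 + α) / (1 - α))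
      + (1 + δ) ^ 2 * α ^ 2 / (2 * (1 - α)))
    (hσlt : σ < α)
    (hβ : β = (α - σ) / (1 + α / Real.sqrt (2 * n)))
    (Ht : Matrix (Fin n) (Fin n) ℝ) (hHt : Ht.PosSemidef)
    (lam : ℝ) (hlam : 0 ≤ lam)
    (Ω : Matrix (Fin n) (Fin n ⊕ Fin n) ℝ)
    (hΩ : Ω = Matrix.fromCols (1 : Matrix (Fin n) (Fin n) ℝ) (-1))
    (τ : ℝ) (hτ : 0 < τ)
    (x s xt st : Fin n ⊕ Fin n → ℝ)
    (hx : ∀ i, 0 < x i) (hs : ∀ i, 0 < s i)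
    (hxt : ∀ i, 0 < xt i) (hst : ∀ i, 0 < st i)
    (hcen : enorm' (fun i => x i * s i - τ) ≤ α * τ)
    (hratx : ∀ i, xt i / x i ∈ Set.Icc (1 / (1 + δ)) (1 + δ))
    (hrats : ∀ i, st i / s i ∈ Set.Icc (1 / (1 + δ)) (1 + δ))
    (Δz : Fin n → ℝ) (Δx Δs : Fin n ⊕ Fin n → ℝ)
    (heq1 : (2 * lam) • Ht.mulVec Δz + Ω.mulVec Δx = 0)
    (heq2 : Ωᵀ.mulVec Δz + Δs = 0)
    (heq3 : (fun i => st i * Δx i + xt i * Δs i) = fun i => τ - x i * s i)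
    (xp sp : Fin n ⊕ Fin n → ℝ)
    (hxp : xp = x + Δx) (hsp : sp = s + Δs)
    (τp : ℝ) (hτp : τp = (1 - β / Real.sqrt (2 * n)) * τ) :
    (∀ i, 0 < xp i) ∧ (∀ i, 0 < sp i) ∧
    enorm' (fun i => xp i * sp i - τp) ≤ α * τp := by
  obtain ⟨hα0, hα1⟩ := hα
  have h1mα : (0:ℝ) < 1 - α := by linarith
  have h1pα : (0:ℝ) < 1 + α := by linarith
  have h1pδ : (0:ℝ) < 1 + δ := by linarith
  -- split σ into its two parts
  set σ1 : ℝ := Real.sqrt 2 * δ * (1 + δ) ^ 2 * α * Real.sqrt ((1 + α) / (1 - α)) with hσ1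
  set σ2 : ℝ := (1 + δ) ^ 2 * α ^ 2 / (2 * (1 - α)) with hσ2
  have hσ1nn : 0 ≤ σ1 := by
    rw [hσ1]
    exact mul_nonneg (mul_nonneg (mul_nonneg (mul_nonneg (Real.sqrt_nonneg _) hδ.le)
      (sq_nonneg _)) hα0.le) (Real.sqrt_nonneg _)
  have hσ2nn : 0 ≤ σ2 := by
    rw [hσ2]
    exact div_nonneg (mul_nonneg (sq_nonneg _) (sq_nonneg _)) (by linarith)
  have hσsplit : σ = σ1 + σ2 := hσdef
  have hσnn : 0 ≤ σ := by rw [hσsplit]; linarith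
  -- facts about N = √(2n)
  set N : ℝ := Real.sqrt (2 * n) with hNdef
  have hN1 : 1 ≤ N := by
    rw [hNdef, show (1:ℝ) = Real.sqrt 1 from Real.sqrt_one.symm]
    apply Real.sqrt_le_sqrt
    have : (1:ℝ) ≤ (n : ℝ) := by exact_mod_cast hn
    linarith
  have hN0 : 0 < N := lt_of_lt_of_le one_pos hN1
  -- facts about β
  have hden : 0 < 1 + α / N := by
    have : 0 < α / N := div_pos hα0 hN0
    linarith
  have hβval : β * (1 + α / N) = α - σ := by
    rw [hβ, div_mul_cancel₀ _ (ne_of_gt hden)]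
  have hβnn : 0 ≤ β := by
    rw [hβ]; exact div_nonneg (by linarith) hden.le
  have hβle : β ≤ α - σ := by
    nlinarith [mul_nonneg hβnn (div_nonneg hα0.le hN0.le)]
  have hβN : β / N < 1 := by
    rw [div_lt_one hN0]; linarith
  have hτp0 : 0 < τp := by
    rw [hτp]; exact mul_pos (by linarith) hτ
  -- componentwise centrality bounds
  have hcomp : ∀ i, |x i * s i - τ| ≤ α * τ :=
    fun i => (abs_le_enorm' (fun i => x i * s i - τ) i).trans hcen
  have hxslo : ∀ i, (1 - α) * τ ≤ x i * s i := by
    intro i; have := (abs_le.mp (hcomp i)).1; linarith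
  have hxshi : ∀ i, x i * s i ≤ (1 + α) * τ := by
    intro i; have := (abs_le.mp (hcomp i)).2; linarith
  -- ratio bounds
  have hxt1 : ∀ i, xt i ≤ (1 + δ) * x i := by
    intro i; have := (hratx i).2; rw [div_le_iff₀ (hx i)] at this; linarith
  have hxt2 : ∀ i, x i ≤ (1 + δ) * xt i := by
    intro i; have := (hratx i).1
    rw [div_le_div_iff₀ h1pδ (hx i)] at this; linarith
  have hst1 : ∀ i, st i ≤ (1 + δ) * s i := by
    intro i; have := (hrats i).2; rw [div_le_iff₀ (hs i)] at this; linarith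
  have hst2 : ∀ i, s i ≤ (1 + δ) * st i := by
    intro i; have := (hrats i).1
    rw [div_le_div_iff₀ h1pδ (hs i)] at this; linarith
  have hdxt : ∀ i, |x i - xt i| ≤ δ * xt i := fun i => ratio_abs hδ (hxt1 i) (hxt2 i)
  have hdst : ∀ i, |s i - st i| ≤ δ * st i := fun i => ratio_abs hδ (hst1 i) (hst2 i)
  -- the scaled step vectors
  set w : Fin n ⊕ Fin n → ℝ := fun i => Real.sqrt (xt i * st i) with hwdef
  set p : Fin n ⊕ Fin n → ℝ := fun i => Δx i * Real.sqrt (st i) / Real.sqrt (xt i) with hpdef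
  set q : Fin n ⊕ Fin n → ℝ := fun i => Δs i * Real.sqrt (xt i) / Real.sqrt (st i) with hqdef
  have hw0 : ∀ i, 0 < w i := fun i => Real.sqrt_pos.mpr (mul_pos (hxt i) (hst i))
  have key : ∀ i, p i * q i = Δx i * Δs i ∧ w i * p i = st i * Δx i ∧
      w i * q i = xt i * Δs i := by
    intro i
    have hxp0 : 0 < Real.sqrt (xt i) := Real.sqrt_pos.mpr (hxt i)
    have hsp0 : 0 < Real.sqrt (st i) := Real.sqrt_pos.mpr (hst i)
    have hx2 : Real.sqrt (xt i) * Real.sqrt (xt i) = xt i := Real.mul_self_sqrt (hxt i).le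
    have hs2 : Real.sqrt (st i) * Real.sqrt (st i) = st i := Real.mul_self_sqrt (hst i).le
    have hwi : w i = Real.sqrt (xt i) * Real.sqrt (st i) := Real.sqrt_mul (hxt i).le _
    have hxne : Real.sqrt (xt i) ≠ 0 := ne_of_gt hxp0
    have hsne : Real.sqrt (st i) ≠ 0 := ne_of_gt hsp0
    refine ⟨?_, ?_, ?_⟩
    · simp only [hpdef, hqdef]
      have hrw : Δx i * Real.sqrt (st i) / Real.sqrt (xt i)
          * (Δs i * Real.sqrt (xt i) / Real.sqrt (st i))
          = Δx i * Δs i * (Real.sqrt (xt i) / Real.sqrt (xt i))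
            * (Real.sqrt (st i) / Real.sqrt (st i)) := by ring
      rw [hrw, div_self hxne, div_self hsne, mul_one, mul_one]
    · simp only [hpdef]
      rw [hwi]
      have hrw : Real.sqrt (xt i) * Real.sqrt (st i)
          * (Δx i * Real.sqrt (st i) / Real.sqrt (xt i))
          = Δx i * (Real.sqrt (st i) * Real.sqrt (st i))
            * (Real.sqrt (xt i) / Real.sqrt (xt i)) := by ring
      rw [hrw, div_self hxne, hs2, mul_one]
      ring
    · simp only [hqdef]
      rw [hwi]
      have hrw : Real.sqrt (xt i) * Real.sqrt (st i)
          * (Δs i * Real.sqrt (xt i) / Real.sqrt (st i))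
          = Δs i * (Real.sqrt (xt i) * Real.sqrt (xt i))
            * (Real.sqrt (st i) / Real.sqrt (st i)) := by ring
      rw [hrw, div_self hsne, hx2, mul_one]
      ring
  have hsum : ∀ i, w i * (p i + q i) = τ - x i * s i := by
    intro i
    have h3 := congrFun heq3 i
    rw [mul_add, (key i).2.1, (key i).2.2]
    exact h3
  -- sum of squares of the residual
  have hr2 : ∑ i, (τ - x i * s i) ^ 2 ≤ (α * τ) ^ 2 := by
    have h1 : enorm' (fun i => x i * s i - τ) ^ 2 ≤ (α * τ) ^ 2 :=
      pow_le_pow_left₀ (enorm'_nonneg _) hcen 2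
    rw [sq_enorm'] at h1
    calc ∑ i, (τ - x i * s i) ^ 2 = ∑ i, (x i * s i - τ) ^ 2 :=
          Finset.sum_congr rfl (fun i _ => by ring)
    _ ≤ (α * τ) ^ 2 := h1
  set V2 : ℝ := (1 + δ) ^ 2 * α ^ 2 * τ / (1 - α) with hV2
  have hV2nn : 0 ≤ V2 := by
    rw [hV2]
    exact div_nonneg (mul_nonneg (mul_nonneg (sq_nonneg _) (sq_nonneg _)) hτ.le) h1mα.le
  have hvsum : ∑ i, (p i + q i) ^ 2 ≤ V2 := by
    have hper : ∀ i, (1 - α) * τ * (p i + q i) ^ 2 ≤ (1 + δ) ^ 2 * (τ - x i * s i) ^ 2 := by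
      intro i
      have h1 : w i ^ 2 * (p i + q i) ^ 2 = (τ - x i * s i) ^ 2 := by
        rw [← mul_pow, hsum i]
      have hw2 : w i ^ 2 = xt i * st i := Real.sq_sqrt (mul_pos (hxt i) (hst i)).le
      have h2 : (1 - α) * τ ≤ (1 + δ) ^ 2 * w i ^ 2 := by
        rw [hw2]
        have ha : x i * s i ≤ ((1 + δ) * xt i) * ((1 + δ) * st i) :=
          mul_le_mul (hxt2 i) (hst2 i) (hs i).le (mul_pos h1pδ (hxt i)).le
        have hb : ((1 + δ) * xt i) * ((1 + δ) * st i) = (1 + δ) ^ 2 * (xt i * st i) := by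
          ring
        linarith [hxslo i]
      have h4 : (1 - α) * τ * (p i + q i) ^ 2 ≤ (1 + δ) ^ 2 * w i ^ 2 * (p i + q i) ^ 2 :=
        mul_le_mul_of_nonneg_right h2 (sq_nonneg _)
      have h5 : (1 + δ) ^ 2 * w i ^ 2 * (p i + q i) ^ 2 = (1 + δ) ^ 2 * (τ - x i * s i) ^ 2 := by
        rw [mul_assoc, h1]
      linarith
    have hs1 : (1 - α) * τ * (∑ i, (p i + q i) ^ 2) ≤ (1 + δ) ^ 2 * ((α * τ) ^ 2) := by
      calc (1 - α) * τ * (∑ i, (p i + q i) ^ 2)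
          = ∑ i, (1 - α) * τ * (p i + q i) ^ 2 := Finset.mul_sum _ _ _
      _ ≤ ∑ i, (1 + δ) ^ 2 * (τ - x i * s i) ^ 2 := Finset.sum_le_sum fun i _ => hper i
      _ = (1 + δ) ^ 2 * ∑ i, (τ - x i * s i) ^ 2 := (Finset.mul_sum _ _ _).symm
      _ ≤ (1 + δ) ^ 2 * ((α * τ) ^ 2) :=
          mul_le_mul_of_nonneg_left hr2 (sq_nonneg _)
    rw [hV2, le_div_iff₀ h1mα]
    have h3 : τ * ((∑ i, (p i + q i) ^ 2) * (1 - α)) ≤ τ * ((1 + δ) ^ 2 * α ^ 2 * τ) := by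
      calc τ * ((∑ i, (p i + q i) ^ 2) * (1 - α)) = (1 - α) * τ * (∑ i, (p i + q i) ^ 2) := by
            ring
      _ ≤ (1 + δ) ^ 2 * ((α * τ) ^ 2) := hs1
      _ = τ * ((1 + δ) ^ 2 * α ^ 2 * τ) := by ring
    exact le_of_mul_le_mul_left h3 hτ
  -- orthogonality-type inequality from the Newton system
  have hK : 0 ≤ ∑ i, Δx i * Δs i := by
    have hΔs : Δs = -(Ωᵀ.mulVec Δz) := eq_neg_of_add_eq_zero_right heq2
    have hΩx : Ω.mulVec Δx = -((2 * lam) • Ht.mulVec Δz) := eq_neg_of_add_eq_zero_right heq1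
    have hcalc : ∑ i, Δx i * Δs i = (2 * lam) * (Δz ⬝ᵥ Ht.mulVec Δz) := by
      calc ∑ i, Δx i * Δs i = Δx ⬝ᵥ Δs := rfl
      _ = Δx ⬝ᵥ (-(Ωᵀ.mulVec Δz)) := by rw [hΔs]
      _ = -(Δx ⬝ᵥ Ωᵀ.mulVec Δz) := dotProduct_neg _ _
      _ = -((Ω.mulVec Δx) ⬝ᵥ Δz) := by
          rw [Matrix.dotProduct_mulVec, Matrix.vecMul_transpose]
      _ = -((-((2 * lam) • Ht.mulVec Δz)) ⬝ᵥ Δz) := by rw [hΩx]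
      _ = ((2 * lam) • Ht.mulVec Δz) ⬝ᵥ Δz := by rw [neg_dotProduct, neg_neg]
      _ = (2 * lam) * ((Ht.mulVec Δz) ⬝ᵥ Δz) := smul_dotProduct _ _ _
      _ = (2 * lam) * (Δz ⬝ᵥ Ht.mulVec Δz) := by rw [dotProduct_comm]
    rw [hcalc]
    exact mul_nonneg (by linarith) (by simpa using hHt.dotProduct_mulVec_nonneg Δz)
  have hPQ : (∑ i, p i ^ 2) + (∑ i, q i ^ 2) ≤ V2 := by
    have hexp : ∑ i, (p i + q i) ^ 2
        = (∑ i, p i ^ 2) + (∑ i, q i ^ 2) + 2 * ∑ i, p i * q i := by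
      rw [← Finset.sum_add_distrib, Finset.mul_sum, ← Finset.sum_add_distrib]
      exact Finset.sum_congr rfl fun i _ => by ring
    have hK' : ∑ i, p i * q i = ∑ i, Δx i * Δs i :=
      Finset.sum_congr rfl fun i _ => (key i).1
    rw [hK'] at hexp
    linarith [hvsum]
  -- the second-order term
  set u : Fin n ⊕ Fin n → ℝ := fun i => Δx i * Δs i with hudef
  have huE : enorm' u ≤ σ2 * τ := by
    have h1 : enorm' u ≤ ∑ i, |u i| := enorm'_le_sum_abs u
    have h2 : ∑ i, |u i| ≤ ∑ i, (p i ^ 2 + q i ^ 2) / 2 := by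
      refine Finset.sum_le_sum fun i _ => ?_
      have habs : |u i| = |p i| * |q i| := by
        simp only [hudef]; rw [← (key i).1, abs_mul]
      have h := two_mul_le_add_sq |p i| |q i|
      rw [sq_abs, sq_abs] at h
      rw [habs]; linarith
    have h2' : ∑ i, (p i ^ 2 + q i ^ 2) / 2 = ((∑ i, p i ^ 2) + ∑ i, q i ^ 2) / 2 := by
      rw [← Finset.sum_div, Finset.sum_add_distrib]
    have h3 : σ2 * τ = V2 / 2 := by
      have hne : (1:ℝ) - α ≠ 0 := ne_of_gt h1mα
      rw [hσ2, hV2]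
      field_simp
    rw [h3]
    linarith [hPQ]
  -- the scaling-error term
  set E : Fin n ⊕ Fin n → ℝ := fun i => (s i - st i) * Δx i + (x i - xt i) * Δs i with hEdef
  set M : ℝ := (1 + δ) * Real.sqrt ((1 + α) * τ) with hM
  have hMnn : 0 ≤ M := by rw [hM]; exact mul_nonneg h1pδ.le (Real.sqrt_nonneg _)
  have hwM : ∀ i, w i ≤ M := by
    intro i
    have ha : xt i * st i ≤ ((1 + δ) * x i) * ((1 + δ) * s i) :=
      mul_le_mul (hxt1 i) (hst1 i) (hst i).le (mul_pos h1pδ (hx i)).le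
    have hb : ((1 + δ) * x i) * ((1 + δ) * s i) = (1 + δ) ^ 2 * (x i * s i) := by ring
    have hc : (1 + δ) ^ 2 * (x i * s i) ≤ (1 + δ) ^ 2 * ((1 + α) * τ) :=
      mul_le_mul_of_nonneg_left (hxshi i) (sq_nonneg _)
    have h1 : xt i * st i ≤ (1 + δ) ^ 2 * ((1 + α) * τ) := by linarith
    calc w i ≤ Real.sqrt ((1 + δ) ^ 2 * ((1 + α) * τ)) := Real.sqrt_le_sqrt h1
    _ = (1 + δ) * Real.sqrt ((1 + α) * τ) := by
        rw [Real.sqrt_mul (by positivity), Real.sqrt_sq h1pδ.le]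
  have hEi : ∀ i, |E i| ≤ δ * M * (|p i| + |q i|) := by
    intro i
    have habs1 : w i * |p i| = st i * |Δx i| := by
      have := congrArg abs ((key i).2.1)
      rwa [abs_mul, abs_mul, abs_of_pos (hw0 i), abs_of_pos (hst i)] at this
    have habs2 : w i * |q i| = xt i * |Δs i| := by
      have := congrArg abs ((key i).2.2)
      rwa [abs_mul, abs_mul, abs_of_pos (hw0 i), abs_of_pos (hxt i)] at this
    have h1 : |E i| ≤ |s i - st i| * |Δx i| + |x i - xt i| * |Δs i| := by
      simp only [hEdef]
      exact (abs_add_le _ _).trans (by rw [abs_mul, abs_mul])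
    have h2 : |s i - st i| * |Δx i| ≤ δ * (st i * |Δx i|) := by
      have := mul_le_mul_of_nonneg_right (hdst i) (abs_nonneg (Δx i))
      linarith [this, mul_assoc δ (st i) |Δx i|]
    have h3 : |x i - xt i| * |Δs i| ≤ δ * (xt i * |Δs i|) := by
      have := mul_le_mul_of_nonneg_right (hdxt i) (abs_nonneg (Δs i))
      linarith [this, mul_assoc δ (xt i) |Δs i|]
    have h4 : st i * |Δx i| ≤ M * |p i| := by
      rw [← habs1]; exact mul_le_mul_of_nonneg_right (hwM i) (abs_nonneg _)
    have h5 : xt i * |Δs i| ≤ M * |q i| := by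
      rw [← habs2]; exact mul_le_mul_of_nonneg_right (hwM i) (abs_nonneg _)
    have h6 : δ * (st i * |Δx i|) ≤ δ * (M * |p i|) := mul_le_mul_of_nonneg_left h4 hδ.le
    have h7 : δ * (xt i * |Δs i|) ≤ δ * (M * |q i|) := mul_le_mul_of_nonneg_left h5 hδ.le
    have h8 : δ * (M * |p i|) + δ * (M * |q i|) = δ * M * (|p i| + |q i|) := by ring
    linarith
  have hEnorm : enorm' E ≤ σ1 * τ := by
    have h1 : enorm' E ≤ enorm' (fun i => δ * M * (|p i| + |q i|)) := by
      refine enorm'_mono fun i => ?_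
      have h0 : |δ * M * (|p i| + |q i|)| = δ * M * (|p i| + |q i|) :=
        abs_of_nonneg (mul_nonneg (mul_nonneg hδ.le hMnn)
          (add_nonneg (abs_nonneg _) (abs_nonneg _)))
      rw [h0]
      exact hEi i
    have h2 : enorm' (fun i => δ * M * (|p i| + |q i|))
        = δ * M * enorm' (fun i => |p i| + |q i|) :=
      enorm'_smul _ (mul_nonneg hδ.le hMnn) _
    have h3 : enorm' (fun i => |p i| + |q i|) ≤ enorm' p + enorm' q :=
      (enorm'_add_le _ _).trans (by rw [enorm'_abs, enorm'_abs])
    have h4 : (enorm' p + enorm' q) ^ 2 ≤ 2 * V2 := by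
      have e1 : enorm' p ^ 2 + enorm' q ^ 2 ≤ V2 := by
        rw [sq_enorm', sq_enorm']; exact hPQ
      nlinarith [sq_nonneg (enorm' p - enorm' q)]
    have h5 : (δ * M * (enorm' p + enorm' q)) ^ 2 ≤ (σ1 * τ) ^ 2 := by
      have hM2 : M ^ 2 = (1 + δ) ^ 2 * ((1 + α) * τ) := by
        rw [hM, mul_pow, Real.sq_sqrt (mul_pos h1pα hτ).le]
      have hs2' : Real.sqrt 2 ^ 2 = 2 := Real.sq_sqrt (by norm_num)
      have hsr : Real.sqrt ((1 + α) / (1 - α)) ^ 2 = (1 + α) / (1 - α) :=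
        Real.sq_sqrt (div_nonneg h1pα.le h1mα.le)
      have hσ1τ : (σ1 * τ) ^ 2
          = Real.sqrt 2 ^ 2 * Real.sqrt ((1 + α) / (1 - α)) ^ 2
            * δ ^ 2 * (1 + δ) ^ 4 * α ^ 2 * τ ^ 2 := by
        rw [hσ1]; ring
      have hne : (1:ℝ) - α ≠ 0 := ne_of_gt h1mα
      calc (δ * M * (enorm' p + enorm' q)) ^ 2
          = δ ^ 2 * M ^ 2 * (enorm' p + enorm' q) ^ 2 := by ring
      _ ≤ δ ^ 2 * M ^ 2 * (2 * V2) :=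
          mul_le_mul_of_nonneg_left h4 (mul_nonneg (sq_nonneg _) (sq_nonneg _))
      _ = (σ1 * τ) ^ 2 := by
          rw [hσ1τ, hs2', hsr, hM2, hV2]
          field_simp
    have h6 : δ * M * (enorm' p + enorm' q) ≤ σ1 * τ :=
      le_of_sq_le_sq' (mul_nonneg hσ1nn hτ.le) h5
    have h7 : enorm' E ≤ δ * M * (enorm' p + enorm' q) := by
      refine h1.trans ?_
      rw [h2]
      exact mul_le_mul_of_nonneg_left h3 (mul_nonneg hδ.le hMnn)
    exact h7.trans h6
  -- the key identity for the next iterate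
  have hfin : ∀ i, xp i * sp i - τp = u i + E i + β / N * τ := by
    intro i
    have h3 := congrFun heq3 i
    simp only [hxp, hsp, Pi.add_apply, hτp, hEdef, hudef]
    linear_combination h3
  -- componentwise bounds on u and E
  have huabs : ∀ i, -(σ2 * τ) ≤ u i := fun i =>
    (abs_le.mp ((abs_le_enorm' u i).trans huE)).1
  have hEabs : ∀ i, -(σ1 * τ) ≤ E i := fun i =>
    (abs_le.mp ((abs_le_enorm' E i).trans hEnorm)).1
  -- quadratic expansion along the segment
  have hseg : ∀ (t : ℝ) (i : Fin n ⊕ Fin n),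
      (x i + t * Δx i) * (s i + t * Δs i)
        = (1 - t) * (x i * s i) + t * τ + t * E i + t ^ 2 * u i := by
    intro t i
    have h3 := congrFun heq3 i
    simp only [hEdef, hudef]
    linear_combination t * h3
  have hposval : ∀ (t : ℝ), 0 < t → t ≤ 1 → ∀ i,
      0 < (1 - t) * (x i * s i) + t * τ + t * E i + t ^ 2 * u i := by
    intro t ht0 ht1 i
    have e1 : (1 - t) * ((1 - α) * τ) ≤ (1 - t) * (x i * s i) :=
      mul_le_mul_of_nonneg_left (hxslo i) (by linarith)
    have e2 : -(t * (σ1 * τ)) ≤ t * E i := by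
      have := mul_le_mul_of_nonneg_left (hEabs i) ht0.le
      linarith
    have e3 : -(t * (σ2 * τ)) ≤ t ^ 2 * u i := by
      have b1 : t ^ 2 * (-(σ2 * τ)) ≤ t ^ 2 * u i :=
        mul_le_mul_of_nonneg_left (huabs i) (sq_nonneg t)
      have htt : t ^ 2 ≤ t := by nlinarith
      have b2 : t ^ 2 * (σ2 * τ) ≤ t * (σ2 * τ) :=
        mul_le_mul_of_nonneg_right htt (mul_nonneg hσ2nn hτ.le)
      linarith
    have e4 : 0 < (1 - t) * ((1 - α) * τ) + t * τ - t * (σ1 * τ) - t * (σ2 * τ) := by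
      have hrw : t * τ - t * (σ1 * τ) - t * (σ2 * τ) = t * τ * (1 - σ) := by
        rw [hσsplit]; ring
      have c1 : 0 < t * τ * (1 - σ) :=
        mul_pos (mul_pos ht0 hτ) (by linarith)
      have c2 : 0 ≤ (1 - t) * ((1 - α) * τ) :=
        mul_nonneg (by linarith) (mul_nonneg h1mα.le hτ.le)
      linarith
    linarith
  -- positivity of the next iterates
  have hxpos : ∀ i, 0 < xp i := by
    intro i
    by_contra hcon
    push_neg at hcon
    rw [hxp, Pi.add_apply] at hcon
    have hΔ : Δx i < 0 := by linarith [hx i]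
    have hΔ0 : (0:ℝ) < -Δx i := by linarith
    set t : ℝ := x i / (-Δx i) with ht
    have ht0 : 0 < t := div_pos (hx i) hΔ0
    have ht1 : t ≤ 1 := (div_le_one hΔ0).mpr (by linarith)
    have hroot : x i + t * Δx i = 0 := by
      rw [ht]; field_simp; rw [div_self hΔ.ne]; ring
    have hzero : (x i + t * Δx i) * (s i + t * Δs i) = 0 := by
      rw [hroot, zero_mul]
    have := hposval t ht0 ht1 i
    rw [← hseg t i] at this
    linarith
  have hspos : ∀ i, 0 < sp i := by
    intro i
    by_contra hcon
    push_neg at hcon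
    rw [hsp, Pi.add_apply] at hcon
    have hΔ : Δs i < 0 := by linarith [hs i]
    have hΔ0 : (0:ℝ) < -Δs i := by linarith
    set t : ℝ := s i / (-Δs i) with ht
    have ht0 : 0 < t := div_pos (hs i) hΔ0
    have ht1 : t ≤ 1 := (div_le_one hΔ0).mpr (by linarith)
    have hroot : s i + t * Δs i = 0 := by
      rw [ht]; field_simp; rw [div_self hΔ.ne]; ring
    have hzero : (x i + t * Δx i) * (s i + t * Δs i) = 0 := by
      rw [hroot, mul_zero]
    have := hposval t ht0 ht1 i
    rw [← hseg t i] at this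
    linarith
  -- the norm bound
  refine ⟨hxpos, hspos, ?_⟩
  have hconst : enorm' (fun _ : Fin n ⊕ Fin n => β / N * τ) = β * τ := by
    rw [enorm'_const _ (mul_nonneg (div_nonneg hβnn hN0.le) hτ.le)]
    have hcard : ((Fintype.card (Fin n ⊕ Fin n) : ℕ) : ℝ) = 2 * (n : ℝ) := by
      simp [Fintype.card_sum]
      ring
    rw [hcard, ← hNdef]
    field_simp
  have h0 : (fun i => xp i * sp i - τp) = fun i => (u i + E i) + β / N * τ :=
    funext fun i => by rw [hfin i]
  have hb1 : enorm' (fun i => xp i * sp i - τp)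
      ≤ enorm' (fun i => u i + E i) + enorm' (fun _ : Fin n ⊕ Fin n => β / N * τ) := by
    rw [h0]; exact enorm'_add_le _ _
  have hb2 : enorm' (fun i => u i + E i) ≤ enorm' u + enorm' E := enorm'_add_le u E
  have hfinal : σ2 * τ + σ1 * τ + β * τ ≤ α * τp := by
    rw [hτp]
    have heq : σ2 * τ + σ1 * τ + β * τ = α * ((1 - β / N) * τ) := by
      linear_combination τ * hβval - τ * hσsplit
    linarith [heq.le]
  calc enorm' (fun i => xp i * sp i - τp)
      ≤ enorm' u + enorm' E + enorm' (fun _ : Fin n ⊕ Fin n => β / N * τ) := by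
        linarith [hb1, hb2]
  _ ≤ σ2 * τ + σ1 * τ + β * τ := by rw [hconst]; linarith [huE, hEnorm]
  _ ≤ α * τp := hfinal
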